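/- Suppose Assumption G holds (each u_i is upper semicontinuous, concave, u_i(x⁰_i) finite, and u_i(x + r·g) > u_i(x) whenever u_i(x) > −∞ and r > 0) and Assumption Z holds: for each i, if u_i(x) > u_i(x') for some x' with u_i(x') > −∞, then u_i(x − ε·g) > −∞ for all sufficiently small ε > 0. If CS(x⁰) := sup{∑_i D_i(x_i) : ∑_i x_i = 0} = 0, then the allocation x⁰ = (x⁰_i)_{i∈I} is Pareto efficient. -/
import Mathlib


open scoped BigOperators
open Metric Filter

noncomputable section

/-- The inner product `p·y = ∑ j, p j * y j`. -/
def dotp {J : Type*} [Fintype J] (p y : EuclideanSpace ℝ J) : ℝ := ∑ j, p j * y j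

/-- A function `u : ℝ^J → ℝ ∪ {±∞}` is concave iff its hypograph is convex. -/
def HypoConcave {J : Type*} [Fintype J] (u : EuclideanSpace ℝ J → EReal) : Prop :=
  Convex ℝ {q : EuclideanSpace ℝ J × ℝ | (q.2 : EReal) ≤ u q.1}

/-- Indifference price function `D(x) = sup {r ∈ ℝ : u(x⁰ + x − r·g) ≥ u(x⁰)}`,
the supremum being taken in `ℝ ∪ {±∞}`. -/
def indiff {J : Type*} [Fintype J] (u : EuclideanSpace ℝ J → EReal)
    (x0 g x : EuclideanSpace ℝ J) : EReal :=
  sSup {e : EReal | ∃ r : ℝ, e = (r : EReal) ∧ u x0 ≤ u (x0 + x - r • g)}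

/-- `p` is a supergradient of `D` at `xb`: `D xb` is finite and
`D x ≤ D xb + p·(x − xb)` for all `x`. -/
def IsSupergradient {J : Type*} [Fintype J] (D : EuclideanSpace ℝ J → EReal)
    (p xb : EuclideanSpace ℝ J) : Prop :=
  D xb ≠ ⊥ ∧ D xb ≠ ⊤ ∧ ∀ x, D x ≤ D xb + ((dotp p (x - xb) : ℝ) : EReal)

/-- Optimal value `v(z)` of the perturbed market clearing problem `(P_z)`. -/
def marketValue {I J : Type*} [Fintype I] [Fintype J]
    (D : I → EuclideanSpace ℝ J → EReal) (z : EuclideanSpace ℝ J) : EReal :=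
  sSup {e : EReal | ∃ x : I → EuclideanSpace ℝ J, (∑ i, x i) = z ∧ e = ∑ i, D i (x i)}

/-- Optimal value of problem `(P')`, the total consumer surplus at allocation `w`. -/
def CSval {I J : Type*} [Fintype I] [Fintype J]
    (u : I → EuclideanSpace ℝ J → EReal) (g : EuclideanSpace ℝ J)
    (w : I → EuclideanSpace ℝ J) : EReal :=
  sSup {e : EReal | ∃ s : ℝ, e = (s : EReal) ∧ ∃ z : I → EuclideanSpace ℝ J,
    (∑ i, z i) + s • g = ∑ i, w i ∧ ∀ i, u i (w i) ≤ u i (z i)}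

/-- Recession function `u^∞(y) = inf_{α>0} (u(x⁰ + α·y) − u(x⁰))/α`. -/
def recession {J : Type*} [Fintype J] (u : EuclideanSpace ℝ J → EReal)
    (x0 y : EuclideanSpace ℝ J) : EReal :=
  sInf {e : EReal | ∃ α : ℝ, 0 < α ∧ e = (u (x0 + α • y) - u x0) / (α : EReal)}

/-- Pareto efficiency of an allocation `x` with total endowment `∑ i, x i`. -/
def ParetoEfficient {I J : Type*} [Fintype I] [Fintype J]
    (u : I → EuclideanSpace ℝ J → EReal) (x : I → EuclideanSpace ℝ J) : Prop :=
  ¬ ∃ x' : I → EuclideanSpace ℝ J, (∑ i, x' i) = (∑ i, x i) ∧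
      (∀ i, u i (x i) ≤ u i (x' i)) ∧ ∃ i, u i (x i) < u i (x' i)

/-- Theorem pareto, second part: under Assumption Z, double auction
equilibria are Pareto efficient. -/
theorem equilibrium_implies_pareto
    {I J : Type*} [Fintype I] [Nonempty I] [Fintype J] [Nonempty J]
    (u : I → EuclideanSpace ℝ J → EReal) (g : EuclideanSpace ℝ J)
    (x0 : I → EuclideanSpace ℝ J)
    (husc : ∀ i, UpperSemicontinuous (u i))
    (hconc : ∀ i, HypoConcave (u i))
    (hne_top : ∀ i x, u i x ≠ ⊤)
    (hfin : ∀ i, u i (x0 i) ≠ ⊥)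
    (hmono : ∀ i, ∀ x : EuclideanSpace ℝ J, ∀ r : ℝ, u i x ≠ ⊥ → 0 < r →
      u i x < u i (x + r • g))
    (hZ : ∀ i, ∀ x x' : EuclideanSpace ℝ J, u i x' ≠ ⊥ → u i x' < u i x →
      ∃ ε0 : ℝ, 0 < ε0 ∧ ∀ ε : ℝ, 0 < ε → ε ≤ ε0 → u i (x - ε • g) ≠ ⊥)
    (heq : marketValue (fun i => indiff (u i) (x0 i) g) 0 = 0) :
    ParetoEfficient u x0 := by
  classical
  rintro ⟨x', hsum, hle, i0, hlt⟩
  -- basic finiteness facts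
  have hx'ne : u i0 (x' i0) ≠ ⊥ := by
    intro h; rw [h] at hlt; exact (not_lt_bot hlt)
  have hc : ((u i0 (x0 i0)).toReal : EReal) = u i0 (x0 i0) :=
    EReal.coe_toReal (hne_top _ _) (hfin i0)
  set c : ℝ := (u i0 (x0 i0)).toReal with hcr
  have hv0 : ((u i0 (x' i0)).toReal : EReal) = u i0 (x' i0) :=
    EReal.coe_toReal (hne_top _ _) hx'ne
  set v0 : ℝ := (u i0 (x' i0)).toReal with hv0r
  have hcv0 : c < v0 := by
    have := hlt; rw [← hc, ← hv0] at this; exact_mod_cast this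
  obtain ⟨ε0, hε0, hεbot⟩ := hZ i0 (x' i0) (x0 i0) (hfin i0) hlt
  have hv1ne : u i0 (x' i0 - ε0 • g) ≠ ⊥ := hεbot ε0 hε0 le_rfl
  have hv1 : ((u i0 (x' i0 - ε0 • g)).toReal : EReal) = u i0 (x' i0 - ε0 • g) :=
    EReal.coe_toReal (hne_top _ _) hv1ne
  set v1 : ℝ := (u i0 (x' i0 - ε0 • g)).toReal with hv1r
  -- choose θ
  set θ : ℝ := min (1/2) ((v0 - c) / (2 * (|v0 - v1| + 1))) with hθdef
  have habs : (0:ℝ) < |v0 - v1| + 1 := by positivity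
  have hθpos : 0 < θ := by
    apply lt_min (by norm_num)
    apply div_pos (by linarith) (by linarith)
  have hθle1 : θ ≤ 1 := le_trans (min_le_left _ _) (by norm_num)
  have hθsmall : θ * |v0 - v1| ≤ (v0 - c) / 2 := by
    have h1 : θ ≤ (v0 - c) / (2 * (|v0 - v1| + 1)) := min_le_right _ _
    have h2 : θ * |v0 - v1| ≤ ((v0 - c) / (2 * (|v0 - v1| + 1))) * |v0 - v1| :=
      mul_le_mul_of_nonneg_right h1 (abs_nonneg _)
    have h3 : ((v0 - c) / (2 * (|v0 - v1| + 1))) * |v0 - v1| ≤ (v0 - c) / 2 := by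
      rw [div_mul_eq_mul_div, div_le_div_iff₀ (by linarith) (by norm_num)]
      nlinarith [abs_nonneg (v0 - v1)]
    linarith
  -- the convex combination value
  have hcomb : c < (1 - θ) * v0 + θ * v1 := by
    have : θ * (v0 - v1) ≤ θ * |v0 - v1| :=
      mul_le_mul_of_nonneg_left (le_abs_self _) hθpos.le
    nlinarith
  -- concavity step
  have hmem1 : ((x' i0, v0) : EuclideanSpace ℝ J × ℝ) ∈
      {q : EuclideanSpace ℝ J × ℝ | (q.2 : EReal) ≤ u i0 q.1} := by
    simp only [Set.mem_setOf_eq]; exact le_of_eq hv0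
  have hmem2 : ((x' i0 - ε0 • g, v1) : EuclideanSpace ℝ J × ℝ) ∈
      {q : EuclideanSpace ℝ J × ℝ | (q.2 : EReal) ≤ u i0 q.1} := by
    simp only [Set.mem_setOf_eq]; exact le_of_eq hv1
  have hcvx := hconc i0 hmem1 hmem2 (a := 1 - θ) (b := θ)
    (by linarith) hθpos.le (by ring)
  simp only [Set.mem_setOf_eq, Prod.smul_mk, Prod.mk_add_mk, smul_eq_mul] at hcvx
  have hpt : (1 - θ) • x' i0 + θ • (x' i0 - ε0 • g) = x' i0 - (θ * ε0) • g := by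
    module
  rw [hpt] at hcvx
  set t : ℝ := θ * ε0 with htdef
  have htpos : 0 < t := mul_pos hθpos hε0
  have hustep : u i0 (x0 i0) ≤ u i0 (x' i0 - t • g) := by
    calc u i0 (x0 i0) = ((c : ℝ) : EReal) := hc.symm
      _ ≤ (((1 - θ) * v0 + θ * v1 : ℝ) : EReal) := by exact_mod_cast hcomb.le
      _ ≤ u i0 (x' i0 - t • g) := hcvx
  -- the allocation
  set x : I → EuclideanSpace ℝ J := fun i => x' i - x0 i with hxdef
  have hxsum : (∑ i, x i) = 0 := by
    simp only [hxdef, Finset.sum_sub_distrib, hsum, sub_self]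
  -- lower bounds on indiff
  have hDge0 : ∀ i, (0 : EReal) ≤ indiff (u i) (x0 i) g (x i) := by
    intro i
    apply le_sSup
    refine ⟨0, by norm_num, ?_⟩
    have : x0 i + x i - (0:ℝ) • g = x' i := by simp [hxdef]
    rw [this]; exact hle i
  have hDi0 : (t : EReal) ≤ indiff (u i0) (x0 i0) g (x i0) := by
    apply le_sSup
    refine ⟨t, rfl, ?_⟩
    have : x0 i0 + x i0 - t • g = x' i0 - t • g := by simp [hxdef]
    rw [this]; exact hustep
  -- sum bound
  have hsumge : (t : EReal) ≤ ∑ i, indiff (u i) (x0 i) g (x i) := by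
    have h1 : (∑ i, (if i = i0 then (t : EReal) else 0)) ≤
        ∑ i, indiff (u i) (x0 i) g (x i) := by
      apply Finset.sum_le_sum
      intro i _
      by_cases h : i = i0
      · subst h; simp [hDi0]
      · simp [h, hDge0 i]
    have h2 : (∑ i, (if i = i0 then (t : EReal) else 0)) = (t : EReal) := by
      simp
    rw [h2] at h1; exact h1
  -- membership in marketValue set
  have hmemMV : (∑ i, indiff (u i) (x0 i) g (x i)) ≤ (0 : EReal) := by
    rw [← heq]
    apply le_sSup
    exact ⟨x, hxsum, rfl⟩
  have : (t : EReal) ≤ 0 := le_trans hsumge hmemMV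
  have : t ≤ (0:ℝ) := by exact_mod_cast this
  linarith
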